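/- A function f : ℝ^d → ℝ is differentiable everywhere with Lipschitz gradient (i.e. C^{1,1}) if and only if it is both semi-concave and semi-convex, i.e. there exists K > 0 such that x ↦ f(x) − K‖x‖² is concave on ℝ^d and x ↦ f(x) + K‖x‖² is convex on ℝ^d. -/

import Mathlib

open Set InnerProductSpace

noncomputable section

set_option linter.unusedSectionVars false
set_option maxHeartbeats 1000000

section Aux

local notation "⟪" x ", " y "⟫" => @inner ℝ _ _ x y

variable {E : Type*} [NormedAddCommGroup E] [InnerProductSpace ℝ E] [CompleteSpace E]

lemma supportConvex {g : E → ℝ} {G : E → E} (h : ∀ x y, g x + ⟪G x, y - x⟫ ≤ g y) :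
    ConvexOn ℝ Set.univ g := by
  refine ⟨convex_univ, fun x _ y _ a b ha hb hab => ?_⟩
  set z := a • x + b • y with hz
  have key : a * ⟪G z, x - z⟫ + b * ⟪G z, y - z⟫ = 0 := by
    rw [← real_inner_smul_right, ← real_inner_smul_right, ← inner_add_right]
    have h0 : a • (x - z) + b • (y - z) = (a • x + b • y) - (a + b) • z := by module
    rw [h0, hab, one_smul, ← hz, sub_self, inner_zero_right]
  have h1 := mul_le_mul_of_nonneg_left (h z x) ha
  have h2 := mul_le_mul_of_nonneg_left (h z y) hb
  have : (a + b) * g z + (a * ⟪G z, x - z⟫ + b * ⟪G z, y - z⟫) ≤ a * g x + b * g y := by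
    ring_nf; ring_nf at h1 h2; linarith
  rw [key, hab] at this; simp only [smul_eq_mul]; linarith

lemma descent {f : E → ℝ} {G : E → E} (hG : ∀ p, HasGradientAt f (G p) p) {L : NNReal}
    (hL : LipschitzWith L G) (x y : E) :
    f y ≤ f x + ⟪G x, y - x⟫ + L * ‖y - x‖ ^ 2 := by
  set v := y - x with hv
  set a : ℝ := ⟪G x, v⟫ with ha
  set c : ℝ := ‖v‖ ^ 2 with hc
  set ψ : ℝ → ℝ := fun t => f (x + t • v) - t * a - L * t ^ 2 * c with hψ
  have hψd : ∀ t : ℝ, HasDerivAt ψ (⟪G (x + t • v), v⟫ - a - L * (2 * t) * c) t := by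
    intro t
    have hcurve : HasDerivAt (fun t : ℝ => x + t • v) v t := by
      simpa using ((hasDerivAt_id t).smul_const v).const_add x
    have h1 : HasDerivAt (fun t : ℝ => f (x + t • v)) (⟪G (x + t • v), v⟫) t := by
      have := ((hG (x + t • v)).hasFDerivAt.comp_hasDerivAt t hcurve)
      simpa [toDual_apply_apply, Function.comp_def] using this
    have h2 : HasDerivAt (fun t : ℝ => t * a) a t := by
      simpa using (hasDerivAt_id t).mul_const a
    have h3 : HasDerivAt (fun t : ℝ => (L : ℝ) * t ^ 2 * c) ((L : ℝ) * (2 * t) * c) t := by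
      have := (hasDerivAt_pow 2 t).const_mul (L : ℝ)
      simpa [mul_comm, mul_assoc, mul_left_comm] using this.mul_const c
    exact (h1.sub h2).sub h3
  have mono : AntitoneOn ψ (Icc 0 1) := by
    apply antitoneOn_of_deriv_nonpos (convex_Icc 0 1)
    · exact fun t _ => ((hψd t).continuousAt).continuousWithinAt
    · exact fun t _ => ((hψd t).differentiableAt).differentiableWithinAt
    · intro t ht
      rw [interior_Icc] at ht
      rw [(hψd t).deriv]
      have hdist := hL.dist_le_mul (x + t • v) x
      rw [dist_eq_norm, dist_eq_norm, add_sub_cancel_left] at hdist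
      have hinner : ⟪G (x + t • v), v⟫ - a = ⟪G (x + t • v) - G x, v⟫ := by
        rw [inner_sub_left]
      have hcs : ⟪G (x + t • v) - G x, v⟫ ≤ ‖G (x + t • v) - G x‖ * ‖v‖ :=
        real_inner_le_norm _ _
      have hns : ‖t • v‖ = t * ‖v‖ := by
        rw [norm_smul, Real.norm_eq_abs, abs_of_pos ht.1]
      have hcnn : (0:ℝ) ≤ c := by rw [hc]; positivity
      have hchain : ⟪G (x + t • v), v⟫ - a ≤ (L : ℝ) * t * c := by
        calc ⟪G (x + t • v), v⟫ - a = ⟪G (x + t • v) - G x, v⟫ := hinner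
          _ ≤ ‖G (x + t • v) - G x‖ * ‖v‖ := hcs
          _ ≤ ((L : ℝ) * ‖t • v‖) * ‖v‖ :=
              mul_le_mul_of_nonneg_right hdist (norm_nonneg v)
          _ = (L : ℝ) * t * c := by rw [hns, hc]; ring
      nlinarith [hchain, mul_nonneg (mul_nonneg L.coe_nonneg ht.1.le) hcnn]
  have hm := mono (left_mem_Icc.2 zero_le_one) (right_mem_Icc.2 zero_le_one) zero_le_one
  have h0 : ψ 0 = f x := by simp [hψ]
  have h1 : ψ 1 = f y - a - L * c := by simp [hψ, hv]
  rw [h0, h1] at hm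
  linarith

lemma neg_hasGradientAt {f : E → ℝ} {G : E → E} (hG : ∀ p, HasGradientAt f (G p) p) :
    ∀ p, HasGradientAt (fun x => -f x) (-G p) p := by
  intro p
  have := (hG p).hasFDerivAt.neg
  have h2 := this.hasGradientAt
  exact (by simpa [map_neg] using h2 : HasGradientAt (-f) (-G p) p)

lemma neg_lipschitz {G : E → E} {L : NNReal} (hL : LipschitzWith L G) :
    LipschitzWith L (fun p => -G p) := by
  apply LipschitzWith.of_dist_le_mul
  intro x y
  simpa [dist_neg_neg] using hL.dist_le_mul x y

lemma norm_sq_expand (x y : E) : ‖y‖ ^ 2 = ‖x‖ ^ 2 + 2 * ⟪x, y - x⟫ + ‖y - x‖ ^ 2 := by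
  have := norm_add_sq_real x (y - x)
  rwa [add_sub_cancel] at this

/-- If `f` has an `L`-Lipschitz gradient and `L ≤ K`, then `f + K‖·‖²` is convex. -/
lemma convexOn_add_quad {f : E → ℝ} {G : E → E} (hG : ∀ p, HasGradientAt f (G p) p)
    {L : NNReal} (hL : LipschitzWith L G) {K : ℝ} (hK : (L : ℝ) ≤ K) :
    ConvexOn ℝ Set.univ (fun x => f x + K * ‖x‖ ^ 2) := by
  apply supportConvex (G := fun p => G p + (2 * K) • p)
  intro x y
  have hd := descent (neg_hasGradientAt hG) (neg_lipschitz hL) x y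
  rw [inner_neg_left] at hd
  have hn := norm_sq_expand x y
  have hi : ⟪G x + (2 * K) • x, y - x⟫ = ⟪G x, y - x⟫ + 2 * K * ⟪x, y - x⟫ := by
    rw [inner_add_left, real_inner_smul_left]
  rw [hi]
  have hnK : K * ‖y‖ ^ 2 = K * ‖x‖ ^ 2 + K * (2 * ⟪x, y - x⟫) + K * ‖y - x‖ ^ 2 := by
    rw [hn]; ring
  have hLK : (L : ℝ) * ‖y - x‖ ^ 2 ≤ K * ‖y - x‖ ^ 2 :=
    mul_le_mul_of_nonneg_right hK (sq_nonneg _)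
  linarith

/-- Existence of a subgradient for a continuous convex function, via Hahn–Banach. -/
lemma exists_subgradient {E : Type*} [NormedAddCommGroup E] [NormedSpace ℝ E]
    {h : E → ℝ} (hconv : ConvexOn ℝ Set.univ h) (hcont : Continuous h) (x : E) :
    ∃ φ : E →L[ℝ] ℝ, ∀ y, h x + φ (y - x) ≤ h y := by
  set S : Set (E × ℝ) := {p | h p.1 < p.2} with hS
  have hSconv : Convex ℝ S := by
    rintro ⟨a, s⟩ has ⟨b, t⟩ hbt u v hu hv huv
    simp only [hS, mem_setOf_eq] at has hbt ⊢
    have hcomb : h (u • a + v • b) ≤ u * h a + v * h b := by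
      simpa using hconv.2 (mem_univ a) (mem_univ b) hu hv huv
    rcases eq_or_lt_of_le hu with hu0 | hu0
    · have hv1 : v = 1 := by linarith
      simp only [← hu0, hv1, zero_smul, one_smul, zero_add, Prod.mk_add_mk, Prod.smul_mk,
        smul_eq_mul, zero_mul, one_mul]
      simpa [← hu0, hv1] using hbt
    · have : u * h a + v * h b < u * s + v * t :=
        add_lt_add_of_lt_of_le (by nlinarith) (by nlinarith)
      calc h (u • a + v • b) ≤ u * h a + v * h b := hcomb
        _ < u * s + v * t := this
  have hSopen : IsOpen S := isOpen_lt (hcont.comp continuous_fst) continuous_snd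
  have hxS : (x, h x) ∉ S := by simp [hS]
  obtain ⟨ℓ, hℓ⟩ := geometric_hahn_banach_open_point hSconv hSopen hxS
  set c : ℝ := ℓ (0, 1) with hcdef
  have hdecomp : ∀ (z : E) (t : ℝ), ℓ (z, t) = ℓ (z, 0) + t * c := by
    intro z t
    have hzt : (z, t) = (z, (0:ℝ)) + t • ((0:E), (1:ℝ)) := by
      simp [Prod.ext_iff]
    rw [hzt, map_add, map_smul, smul_eq_mul, hcdef]
  have hc : c < 0 := by
    have h1 := hℓ (x, h x + 1) (by simp [hS])
    rw [hdecomp x (h x + 1), hdecomp x (h x)] at h1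
    linarith
  have hcpos : 0 < -c := by linarith
  have key : ∀ y, ℓ (y, 0) + h y * c ≤ ℓ (x, 0) + h x * c := by
    intro y
    by_contra hlt
    push_neg at hlt
    set ε : ℝ := (ℓ (y, 0) + h y * c - (ℓ (x, 0) + h x * c)) / (-c) with hεdef
    have hε : 0 < ε := by apply div_pos; linarith; exact hcpos
    have h2 := hℓ (y, h y + ε) (by simp [hS, hε])
    rw [hdecomp y (h y + ε), hdecomp x (h x)] at h2
    have hεc : ε * c = -(ℓ (y, 0) + h y * c - (ℓ (x, 0) + h x * c)) := by
      rw [hεdef, div_mul_eq_mul_div, div_neg, mul_div_assoc, div_self hc.ne]; ring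
    linarith
  refine ⟨(-c)⁻¹ • (ℓ.comp (ContinuousLinearMap.inl ℝ E ℝ)), fun y => ?_⟩
  have hk := key y
  simp only [ContinuousLinearMap.smul_apply, ContinuousLinearMap.coe_comp', Function.comp_apply,
    ContinuousLinearMap.inl_apply, smul_eq_mul]
  have hsub : ℓ (y - x, 0) = ℓ (y, 0) - ℓ (x, 0) := by
    rw [show ((y - x, (0:ℝ)) : E × ℝ) = (y, (0:ℝ)) - (x, (0:ℝ)) by simp [Prod.ext_iff],
      map_sub]
  rw [hsub]
  have h1 : ℓ (y, 0) - ℓ (x, 0) ≤ (h x - h y) * c := by linarith [hk]; 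
  have h2 : (-c)⁻¹ * (ℓ (y, 0) - ℓ (x, 0)) ≤ (-c)⁻¹ * ((h x - h y) * c) :=
    mul_le_mul_of_nonneg_left h1 (by positivity)
  have h3 : (-c)⁻¹ * ((h x - h y) * c) = h y - h x := by
    rw [mul_comm (h x - h y) c, ← mul_assoc, inv_neg, neg_mul, inv_mul_cancel₀ hc.ne]; ring
  linarith

lemma exists_sandwich [FiniteDimensional ℝ E] {f : E → ℝ} {K : ℝ} (hK : 0 < K)
    (hg : ConcaveOn ℝ Set.univ (fun x => f x - K * ‖x‖ ^ 2))
    (hh : ConvexOn ℝ Set.univ (fun x => f x + K * ‖x‖ ^ 2)) (x : E) :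
    ∃ p : E, ∀ y, |f y - f x - ⟪p, y - x⟫| ≤ K * ‖y - x‖ ^ 2 := by
  have hgneg : ConvexOn ℝ Set.univ (fun x => K * ‖x‖ ^ 2 - f x) := by
    have h0 : (fun x : E => K * ‖x‖ ^ 2 - f x) = -(fun x : E => f x - K * ‖x‖ ^ 2) := by
      funext z; simp
    rw [h0]; exact hg.neg
  have hhcont : Continuous (fun x : E => f x + K * ‖x‖ ^ 2) := by
    rw [← continuousOn_univ]; exact hh.continuousOn isOpen_univ
  have hgcont : Continuous (fun x : E => K * ‖x‖ ^ 2 - f x) := by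
    rw [← continuousOn_univ]; exact hgneg.continuousOn isOpen_univ
  obtain ⟨φ, hφ⟩ := exists_subgradient hh hhcont x
  obtain ⟨ψ, hψ⟩ := exists_subgradient hgneg hgcont x
  set L1 : E →L[ℝ] ℝ := φ - (2 * K) • (innerSL ℝ x) with hL1
  set L2 : E →L[ℝ] ℝ := (2 * K) • (innerSL ℝ x) - ψ with hL2
  have happ1 : ∀ v, L1 v = φ v - 2 * K * ⟪x, v⟫ := by
    intro v
    rw [hL1, ContinuousLinearMap.sub_apply, ContinuousLinearMap.smul_apply, innerSL_apply_apply,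
      smul_eq_mul]
  have happ2 : ∀ v, L2 v = 2 * K * ⟪x, v⟫ - ψ v := by
    intro v
    rw [hL2, ContinuousLinearMap.sub_apply, ContinuousLinearMap.smul_apply, innerSL_apply_apply,
      smul_eq_mul]
  have low : ∀ y, f x + L1 (y - x) - K * ‖y - x‖ ^ 2 ≤ f y := by
    intro y
    have h1 := hφ y
    have hn : K * ‖y‖ ^ 2 = K * ‖x‖ ^ 2 + K * (2 * ⟪x, y - x⟫) + K * ‖y - x‖ ^ 2 := by
      rw [norm_sq_expand x y]; ring
    rw [happ1]
    linarith
  have up : ∀ y, f y ≤ f x + L2 (y - x) + K * ‖y - x‖ ^ 2 := by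
    intro y
    have h1 := hψ y
    have hn : K * ‖y‖ ^ 2 = K * ‖x‖ ^ 2 + K * (2 * ⟪x, y - x⟫) + K * ‖y - x‖ ^ 2 := by
      rw [norm_sq_expand x y]; ring
    rw [happ2]
    linarith
  have main : ∀ v : E, L1 v ≤ L2 v := by
    intro v
    by_contra hlt
    push_neg at hlt
    set δ : ℝ := L1 v - L2 v with hδ
    have hδpos : 0 < δ := by simp [hδ]; linarith
    set t : ℝ := δ / (4 * K * ‖v‖ ^ 2 + 1) with ht
    have htpos : 0 < t := by positivity
    have h1 := low (x + t • v)
    have h2 := up (x + t • v)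
    rw [add_sub_cancel_left] at h1 h2
    rw [map_smul, smul_eq_mul] at h1
    rw [map_smul, smul_eq_mul] at h2
    have hns : ‖t • v‖ ^ 2 = t ^ 2 * ‖v‖ ^ 2 := by
      rw [norm_smul, Real.norm_eq_abs, mul_pow, sq_abs]
    rw [hns] at h1 h2
    -- t * L1 v - t * L2 v ≤ 2 K t² ‖v‖², i.e. t * δ ≤ 2 K t² ‖v‖²
    have hkey : t * δ ≤ 2 * K * (t ^ 2 * ‖v‖ ^ 2) := by
      simp only [hδ]; nlinarith [h1, h2]
    -- but 2 K t ‖v‖² < δ by choice of t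
    have htδ : t * (4 * K * ‖v‖ ^ 2 + 1) = δ := by
      rw [ht]; field_simp
    have hsmall : 2 * K * (t * ‖v‖ ^ 2) < δ := by
      nlinarith [htδ, htpos, mul_nonneg (mul_nonneg hK.le htpos.le) (sq_nonneg ‖v‖)]
    nlinarith [hkey, hsmall, htpos]
  have main' : ∀ v : E, L1 v = L2 v := by
    intro v
    refine le_antisymm (main v) ?_
    have := main (-v)
    simpa using this
  refine ⟨(toDual ℝ E).symm L1, fun y => ?_⟩
  rw [abs_le]
  have hip : ⟪(toDual ℝ E).symm L1, y - x⟫ = L1 (y - x) := toDual_symm_apply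
  constructor
  · have h1 := low y
    rw [hip]
    linarith
  · have h2 := up y
    rw [← main' (y - x)] at h2
    rw [hip]
    linarith

lemma hasGradientAt_of_quadratic_bound {f : E → ℝ} {K : ℝ} (hK : 0 < K) {x : E} {p : E}
    (hb : ∀ y, |f y - f x - ⟪p, y - x⟫| ≤ K * ‖y - x‖ ^ 2) :
    HasGradientAt f p x := by
  rw [hasGradientAt_iff_hasFDerivAt, hasFDerivAt_iff_isLittleO_nhds_zero]
  rw [Asymptotics.isLittleO_iff]
  intro c hc
  rw [Metric.eventually_nhds_iff]
  refine ⟨c / K, by positivity, fun {v} hv => ?_⟩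
  rw [dist_zero_right] at hv
  have hb' := hb (x + v)
  rw [add_sub_cancel_left] at hb'
  rw [toDual_apply_apply]
  have h1 : ‖f (x + v) - f x - ⟪p, v⟫‖ ≤ K * ‖v‖ ^ 2 := by
    rwa [Real.norm_eq_abs]
  calc ‖f (x + v) - f x - ⟪p, v⟫‖ ≤ K * ‖v‖ ^ 2 := h1
    _ = (K * ‖v‖) * ‖v‖ := by ring
    _ ≤ c * ‖v‖ := by
        apply mul_le_mul_of_nonneg_right _ (norm_nonneg v)
        have : K * ‖v‖ < K * (c / K) := by
          exact mul_lt_mul_of_pos_left hv hK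
        rw [mul_div_cancel₀ _ (ne_of_gt hK)] at this
        linarith
  
lemma lipschitz_of_quadratic_bound {f : E → ℝ} {K : ℝ} (hK : 0 < K) {G : E → E}
    (hb : ∀ x y, |f y - f x - ⟪G x, y - x⟫| ≤ K * ‖y - x‖ ^ 2) (x y : E) :
    ‖G x - G y‖ ≤ 6 * K * ‖x - y‖ := by
  rw [norm_sub_rev x y, ← norm_sub_rev (G y)]
  rcases eq_or_ne x y with rfl | hxy
  · simp
  rcases eq_or_ne (G y) (G x) with hGeq | hD
  · rw [hGeq]; simp; positivity
  set w : E := G y - G x with hw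
  set r : ℝ := ‖y - x‖ with hr
  set D : ℝ := ‖w‖ with hDdef
  have hrpos : 0 < r := by
    rw [hr, norm_pos_iff, sub_ne_zero]; exact fun hyx => hxy hyx.symm
  have hDpos : 0 < D := by
    rw [hDdef, norm_pos_iff, hw, sub_ne_zero]; exact hD
  set u : E := (r / D) • w with hu
  set z : E := y + u with hz
  have hnu : ‖u‖ = r := by
    rw [hu, norm_smul, Real.norm_eq_abs, abs_of_pos (by positivity), ← hDdef,
      div_mul_cancel₀ _ (ne_of_gt hDpos)]
  have hA := abs_le.1 (hb y z)
  have hB := abs_le.1 (hb x z)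
  have hC := abs_le.1 (hb x y)
  have hzy : z - y = u := by rw [hz]; abel
  have hzx : z - x = (y - x) + u := by rw [hz]; abel
  rw [hzy] at hA
  rw [hzx] at hB
  have hwu : ⟪w, u⟫ = r * D := by
    rw [hu, real_inner_smul_right, real_inner_self_eq_norm_sq, ← hDdef]
    field_simp
  have hGyu : ⟪G y, u⟫ - ⟪G x, u⟫ = r * D := by
    rw [← inner_sub_left, ← hw, hwu]
  have hGxz : ⟪G x, (y - x) + u⟫ = ⟪G x, y - x⟫ + ⟪G x, u⟫ := inner_add_right _ _ _
  have hnzx : ‖(y - x) + u‖ ^ 2 ≤ 4 * r ^ 2 := by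
    have h1 : ‖(y - x) + u‖ ≤ 2 * r := by
      calc ‖(y - x) + u‖ ≤ ‖y - x‖ + ‖u‖ := norm_add_le _ _
        _ = 2 * r := by rw [← hr, hnu]; ring
    nlinarith [norm_nonneg ((y - x) + u)]
  have hnu2 : ‖u‖ ^ 2 = r ^ 2 := by rw [hnu]
  rw [hnu2] at hA
  -- combine: r * D ≤ 6 K r²
  have hmain : r * D ≤ 6 * K * r ^ 2 := by
    nlinarith [hA.1, hA.2, hB.1, hB.2, hC.1, hC.2, hGyu, hGxz,
      mul_le_mul_of_nonneg_left hnzx hK.le]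
  nlinarith [hmain, hrpos]

end Aux

/-- A function `ℝᵈ → ℝ` is `C^{1,1}` — differentiable everywhere with Lipschitz
gradient — if and only if it is both semi-concave and semi-convex: for some `K > 0`,
`x ↦ f(x) − K‖x‖²` is concave and `x ↦ f(x) + K‖x‖²` is convex. -/
theorem C11_iff_semiconcave_and_semiconvex {d : ℕ} (f : EuclideanSpace ℝ (Fin d) → ℝ) :
    (Differentiable ℝ f ∧ ∃ K, LipschitzWith K (fun x => gradient f x)) ↔
    ∃ K > (0:ℝ), ConcaveOn ℝ Set.univ (fun x => f x - K * ‖x‖ ^ 2) ∧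
      ConvexOn ℝ Set.univ (fun x => f x + K * ‖x‖ ^ 2) := by
  constructor
  · rintro ⟨hdiff, L, hL⟩
    have hG : ∀ p, HasGradientAt f (gradient f p) p := fun p => (hdiff p).hasGradientAt
    have hL1 : (L : ℝ) ≤ (L : ℝ) + 1 := by linarith
    refine ⟨(L : ℝ) + 1, by positivity, ?_, convexOn_add_quad hG hL hL1⟩
    have hneg := convexOn_add_quad (neg_hasGradientAt hG) (neg_lipschitz hL) hL1
    have h0 : (fun x : EuclideanSpace ℝ (Fin d) => f x - ((L : ℝ) + 1) * ‖x‖ ^ 2)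
        = -(fun x => -f x + ((L : ℝ) + 1) * ‖x‖ ^ 2) := by
      funext z; simp only [Pi.neg_apply]; ring
    rw [h0]
    exact hneg.neg
  · rintro ⟨K, hK, hg, hh⟩
    choose G hb using fun x => exists_sandwich hK hg hh x
    have hgrad : ∀ x, HasGradientAt f (G x) x :=
      fun x => hasGradientAt_of_quadratic_bound hK (hb x)
    have hdiff : Differentiable ℝ f := fun x => (hgrad x).hasFDerivAt.differentiableAt
    have heq : ∀ x, gradient f x = G x := fun x => (hdiff x).hasGradientAt.unique (hgrad x)
    refine ⟨hdiff, Real.toNNReal (6 * K), ?_⟩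
    apply LipschitzWith.of_dist_le_mul
    intro x y
    rw [dist_eq_norm, dist_eq_norm, heq x, heq y, Real.coe_toNNReal _ (by positivity)]
    exact lipschitz_of_quadratic_bound hK hb x y
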